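/- Let g be a 4×4 real symmetric matrix with det g < 0. An element L ∈ so(g) is simple (equal to u vᵀ g − v uᵀ g for some u, v) if and only if L³ + (tr₂ L)·L = 0. Moreover, if L = u vᵀ g − v uᵀ g, then tr₂ L = (uᵀ g u)(vᵀ g v) − (uᵀ g v)². -/
import Mathlib


open Matrix Polynomial

/-- Explicit expansion of a 4×4 determinant. -/
lemma det4 {R : Type*} [CommRing R] (M : Matrix (Fin 4) (Fin 4) R) :
    M.det =
      M 0 0 * (M 1 1 * (M 2 2 * M 3 3 - M 2 3 * M 3 2) - M 1 2 * (M 2 1 * M 3 3 - M 2 3 * M 3 1)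
        + M 1 3 * (M 2 1 * M 3 2 - M 2 2 * M 3 1))
      - M 0 1 * (M 1 0 * (M 2 2 * M 3 3 - M 2 3 * M 3 2) - M 1 2 * (M 2 0 * M 3 3 - M 2 3 * M 3 0)
        + M 1 3 * (M 2 0 * M 3 2 - M 2 2 * M 3 0))
      + M 0 2 * (M 1 0 * (M 2 1 * M 3 3 - M 2 3 * M 3 1) - M 1 1 * (M 2 0 * M 3 3 - M 2 3 * M 3 0)
        + M 1 3 * (M 2 0 * M 3 1 - M 2 1 * M 3 0))
      - M 0 3 * (M 1 0 * (M 2 1 * M 3 2 - M 2 2 * M 3 1) - M 1 1 * (M 2 0 * M 3 2 - M 2 2 * M 3 0)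
        + M 1 2 * (M 2 0 * M 3 1 - M 2 1 * M 3 0)) := by
  simp [Matrix.det_succ_row_zero, Fin.sum_univ_succ,
    show (Fin.succ 2 : Fin 4) = 3 from rfl,
    show (Fin.succAbove 2 2 : Fin 4) = 3 from rfl,
    show (Fin.succAbove 1 2 : Fin 4) = 3 from rfl,
    show (Fin.castSucc 2 : Fin 4) = 2 from rfl, show Fin.succAbove (3:Fin 4) 2 = 2 from rfl]
  ring

def E1 (M : Matrix (Fin 4) (Fin 4) ℝ) : ℝ := M 0 0 + M 1 1 + M 2 2 + M 3 3

def E2 (M : Matrix (Fin 4) (Fin 4) ℝ) : ℝ :=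
  (M 0 0 * M 1 1 - M 0 1 * M 1 0) + (M 0 0 * M 2 2 - M 0 2 * M 2 0)
  + (M 0 0 * M 3 3 - M 0 3 * M 3 0) + (M 1 1 * M 2 2 - M 1 2 * M 2 1)
  + (M 1 1 * M 3 3 - M 1 3 * M 3 1) + (M 2 2 * M 3 3 - M 2 3 * M 3 2)

def E3 (M : Matrix (Fin 4) (Fin 4) ℝ) : ℝ :=
  (M 1 1 * (M 2 2 * M 3 3 - M 2 3 * M 3 2) - M 1 2 * (M 2 1 * M 3 3 - M 2 3 * M 3 1)
    + M 1 3 * (M 2 1 * M 3 2 - M 2 2 * M 3 1))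
  + (M 0 0 * (M 2 2 * M 3 3 - M 2 3 * M 3 2) - M 0 2 * (M 2 0 * M 3 3 - M 2 3 * M 3 0)
    + M 0 3 * (M 2 0 * M 3 2 - M 2 2 * M 3 0))
  + (M 0 0 * (M 1 1 * M 3 3 - M 1 3 * M 3 1) - M 0 1 * (M 1 0 * M 3 3 - M 1 3 * M 3 0)
    + M 0 3 * (M 1 0 * M 3 1 - M 1 1 * M 3 0))
  + (M 0 0 * (M 1 1 * M 2 2 - M 1 2 * M 2 1) - M 0 1 * (M 1 0 * M 2 2 - M 1 2 * M 2 0)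
    + M 0 2 * (M 1 0 * M 2 1 - M 1 1 * M 2 0))

/-- The k-th order trace of a 4×4 matrix: the coefficient of t^k in det(I + tM). -/
noncomputable def trk (k : ℕ) (M : Matrix (Fin 4) (Fin 4) ℝ) : ℝ :=
  ((1 + (X : ℝ[X]) • M.map C).det).coeff k

lemma detPoly (M : Matrix (Fin 4) (Fin 4) ℝ) :
    (1 + (X : ℝ[X]) • M.map C).det =
      1 + C (E1 M) * X + C (E2 M) * X ^ 2 + C (E3 M) * X ^ 3 + C (M.det) * X ^ 4 := by
  rw [det4, det4]
  simp only [Matrix.add_apply, Matrix.smul_apply, Matrix.map_apply, Matrix.one_apply,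
    smul_eq_mul, E1, E2, E3, map_add, map_sub, _root_.map_mul, Fin.reduceEq, reduceIte,
    if_true, if_false]
  ring

lemma trk2_eq (M : Matrix (Fin 4) (Fin 4) ℝ) : trk 2 M = E2 M := by
  rw [trk, detPoly]
  simp [coeff_one, coeff_X_pow]

lemma trace4 (M : Matrix (Fin 4) (Fin 4) ℝ) : M.trace = E1 M := by
  simp [Matrix.trace, Fin.sum_univ_four, E1, Matrix.diag]

lemma newton3 (M : Matrix (Fin 4) (Fin 4) ℝ) :
    (M * M * M).trace = E1 M ^ 3 - 3 * E1 M * E2 M + 3 * E3 M := by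
  simp only [Matrix.trace, Fin.sum_univ_four, Matrix.diag_apply, Matrix.mul_apply, E1, E2, E3]
  ring

set_option maxHeartbeats 2000000 in
lemma ch4 (M : Matrix (Fin 4) (Fin 4) ℝ) :
    M * M * M * M - E1 M • (M * M * M) + E2 M • (M * M) - E3 M • M + M.det • 1 = 0 := by
  rw [det4]
  ext i j
  fin_cases i <;> fin_cases j <;>
    simp [Matrix.mul_apply, Fin.sum_univ_four, E1, E2, E3, Matrix.one_apply] <;> ring

lemma det_antisym (F : Matrix (Fin 4) (Fin 4) ℝ) (ha : ∀ i j, F j i = -F i j) :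
    F.det = (F 0 1 * F 2 3 - F 0 2 * F 1 3 + F 0 3 * F 1 2) ^ 2 := by
  have h0 : ∀ i, F i i = 0 := fun i => by have := ha i i; linarith
  rw [det4, ha 0 1, ha 0 2, ha 0 3, ha 1 2, ha 1 3, ha 2 3, h0 0, h0 1, h0 2, h0 3]
  ring

set_option maxHeartbeats 4000000 in
lemma plid (F : Matrix (Fin 4) (Fin 4) ℝ) (ha : ∀ i j, F j i = -F i j)
    (hP : F 0 1 * F 2 3 - F 0 2 * F 1 3 + F 0 3 * F 1 2 = 0) :
    ∀ i j k l, F k i * F l j - F l i * F k j = F i j * F k l := by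
  have h0 : ∀ i, F i i = 0 := fun i => by have := ha i i; linarith
  intro i j k l
  fin_cases i <;> fin_cases j <;> fin_cases k <;> fin_cases l <;>
    simp only [Fin.reduceFinMk, Fin.isValue, ha 0 1, ha 0 2, ha 0 3, ha 1 2, ha 1 3, ha 2 3, h0] <;>
    first
      | ring1
      | linear_combination hP
      | linear_combination -hP

lemma triple (g : Matrix (Fin 4) (Fin 4) ℝ) (a b c d : Fin 4 → ℝ) :
    vecMulVec a b * g * (vecMulVec c d * g) = (b ⬝ᵥ g *ᵥ c) • (vecMulVec a d * g) := by
  ext i j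
  simp [Matrix.mul_apply, vecMulVec_apply, Fin.sum_univ_four, dotProduct, mulVec]
  ring

lemma dot_symm (g : Matrix (Fin 4) (Fin 4) ℝ) (hs : ∀ i j, g i j = g j i) (a b : Fin 4 → ℝ) :
    a ⬝ᵥ g *ᵥ b = b ⬝ᵥ g *ᵥ a := by
  simp only [dotProduct, mulVec, Fin.sum_univ_four]
  rw [hs 1 0, hs 2 0, hs 2 1, hs 3 0, hs 3 1, hs 3 2]
  ring

set_option maxHeartbeats 1000000 in
lemma E2_simple (g : Matrix (Fin 4) (Fin 4) ℝ) (hs : ∀ i j, g i j = g j i) (u v : Fin 4 → ℝ) :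
    E2 ((vecMulVec u v - vecMulVec v u) * g)
      = (u ⬝ᵥ g *ᵥ u) * (v ⬝ᵥ g *ᵥ v) - (u ⬝ᵥ g *ᵥ v) ^ 2 := by
  simp only [E2, Matrix.sub_apply, Matrix.mul_apply, vecMulVec_apply, Fin.sum_univ_four,
    dotProduct, mulVec]
  rw [hs 1 0, hs 2 0, hs 2 1, hs 3 0, hs 3 1, hs 3 2]
  ring

lemma cube_simple (g : Matrix (Fin 4) (Fin 4) ℝ) (hs : ∀ i j, g i j = g j i) (u v : Fin 4 → ℝ) :
    ((vecMulVec u v - vecMulVec v u) * g) ^ 3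
      = ((u ⬝ᵥ g *ᵥ v) ^ 2 - (u ⬝ᵥ g *ᵥ u) * (v ⬝ᵥ g *ᵥ v)) •
        ((vecMulVec u v - vecMulVec v u) * g) := by
  set p := u ⬝ᵥ g *ᵥ u with hp
  set q := v ⬝ᵥ g *ᵥ v with hq
  set r := u ⬝ᵥ g *ᵥ v with hrr
  have hr : v ⬝ᵥ g *ᵥ u = r := dot_symm g hs v u ▸ rfl
  set M := vecMulVec u v * g with hM
  set N := vecMulVec v u * g with hN
  set U := vecMulVec u u * g with hU
  set V := vecMulVec v v * g with hV
  have h1 : M * M = r • M := by rw [hM, triple, hr]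
  have h2 : M * N = q • U := by rw [hM, hN, hU, triple]
  have h3 : N * M = p • V := by rw [hM, hN, hV, triple]
  have h4 : N * N = r • N := by rw [hN, triple]
  have h5 : U * M = p • M := by rw [hM, hU, triple]
  have h6 : U * N = r • U := by rw [hN, hU, triple]
  have h7 : V * M = r • V := by rw [hM, hV, triple, hr]
  have h8 : V * N = q • N := by rw [hN, hV, triple]
  have hsub : (vecMulVec u v - vecMulVec v u) * g = M - N := by rw [hM, hN, Matrix.sub_mul]
  rw [hsub]
  have e1 : (M - N) * (M - N) = r • M - q • U - p • V + r • N := by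
    rw [sub_mul, mul_sub, mul_sub, h1, h2, h3, h4]
    abel
  have e2 : (M - N) ^ 3 = ((M - N) * (M - N)) * (M - N) := by
    rw [pow_succ, pow_two]
  rw [e2, e1]
  simp only [Matrix.add_mul, Matrix.sub_mul, Matrix.mul_sub, Matrix.smul_mul, Matrix.mul_smul,
    smul_mul_assoc, mul_smul_comm, h1, h2, h3, h4, h5, h6, h7, h8]
  module

theorem simple_iff_cubic (g L : Matrix (Fin 4) (Fin 4) ℝ)
    (hsymm : gᵀ = g) (hg : g.det < 0) (hL : Lᵀ * g + g * L = 0) :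
    ((∃ u v : Fin 4 → ℝ, L = (vecMulVec u v - vecMulVec v u) * g) ↔
      L ^ 3 + trk 2 L • L = 0) ∧
    (∀ u v : Fin 4 → ℝ, L = (vecMulVec u v - vecMulVec v u) * g →
      trk 2 L = (u ⬝ᵥ g *ᵥ u) * (v ⬝ᵥ g *ᵥ v) - (u ⬝ᵥ g *ᵥ v) ^ 2) := by
  have hs : ∀ i j, g i j = g j i := by
    intro i j
    conv_lhs => rw [← hsymm]
    rfl
  have part2 : ∀ u v : Fin 4 → ℝ, L = (vecMulVec u v - vecMulVec v u) * g →
      trk 2 L = (u ⬝ᵥ g *ᵥ u) * (v ⬝ᵥ g *ᵥ v) - (u ⬝ᵥ g *ᵥ v) ^ 2 := by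
    intro u v huv
    rw [huv, trk2_eq, E2_simple g hs u v]
  refine ⟨⟨?_, ?_⟩, part2⟩
  · -- simple → cubic
    rintro ⟨u, v, huv⟩
    rw [part2 u v huv, huv, cube_simple g hs u v]
    rw [← add_smul]
    ring_nf
    simp
  · -- cubic → simple
    intro hcube
    have hdet : g.det ≠ 0 := ne_of_lt hg
    have hu : IsUnit g.det := isUnit_iff_ne_zero.2 hdet
    have hgi : g * g⁻¹ = 1 := Matrix.mul_nonsing_inv g hu
    have hig : g⁻¹ * g = 1 := Matrix.nonsing_inv_mul g hu
    have hLT : Lᵀ = -(g * L * g⁻¹) := by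
      have h1 : Lᵀ * g = -(g * L) := eq_neg_of_add_eq_zero_left hL
      calc Lᵀ = Lᵀ * (g * g⁻¹) := by rw [hgi, mul_one]
        _ = (Lᵀ * g) * g⁻¹ := by rw [Matrix.mul_assoc]
        _ = -(g * L * g⁻¹) := by rw [h1, Matrix.neg_mul]
    have hcancel : ∀ X : Matrix (Fin 4) (Fin 4) ℝ, g⁻¹ * (g * X) = X := by
      intro X; rw [← Matrix.mul_assoc, hig, Matrix.one_mul]
    have tr0 : ∀ M : Matrix (Fin 4) (Fin 4) ℝ, Mᵀ = -(g * M * g⁻¹) → M.trace = 0 := by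
      intro M hM
      have h1 : M.trace = -(M.trace) := by
        conv_lhs => rw [← Matrix.trace_transpose M]
        rw [hM, Matrix.trace_neg, Matrix.trace_mul_comm, ← Matrix.mul_assoc, hig,
          Matrix.one_mul]
      linarith
    have htr : L.trace = 0 := tr0 L hLT
    have hLT3 : (L * L * L)ᵀ = -(g * (L * L * L) * g⁻¹) := by
      rw [Matrix.transpose_mul, Matrix.transpose_mul, hLT]
      simp only [Matrix.neg_mul, Matrix.mul_neg, neg_neg, Matrix.mul_assoc, hcancel]
    have htr3 : (L * L * L).trace = 0 := tr0 _ hLT3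
    have hE1 : E1 L = 0 := by rw [← trace4, htr]
    have hE3 : E3 L = 0 := by
      have hn := newton3 L
      rw [htr3, hE1] at hn
      linarith
    have hL3 : L ^ 3 = -(E2 L) • L := by
      have h : L ^ 3 + E2 L • L = 0 := by rw [← trk2_eq]; exact hcube
      rw [neg_smul]
      exact eq_neg_of_add_eq_zero_left h
    have hLLL : L * L * L = -(E2 L) • L := by
      rw [← hL3, pow_succ, pow_two]
    have hch := ch4 L
    rw [hE1, hE3] at hch
    simp only [zero_smul, sub_zero, add_zero] at hch
    have hch4 : L * L * L * L = -(E2 L) • (L * L) := by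
      rw [hLLL, Matrix.smul_mul]
    rw [hch4] at hch
    have hdet0 : L.det • (1 : Matrix (Fin 4) (Fin 4) ℝ) = 0 := by
      have : -(E2 L) • (L * L) + E2 L • (L * L) + L.det • (1 : Matrix (Fin 4) (Fin 4) ℝ) = 0 := by
        simpa using hch
      simpa using this
    have hdetL : L.det = 0 := by
      have h00 := congrFun (congrFun hdet0 0) 0
      simpa [Matrix.one_apply] using h00
    set F := L * g⁻¹ with hF
    have hFg : F * g = L := by
      rw [hF, Matrix.mul_assoc, hig, Matrix.mul_one]
    have hFT : Fᵀ = -F := by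
      rw [hF, Matrix.transpose_mul, Matrix.transpose_nonsing_inv, hsymm, hLT]
      rw [Matrix.mul_neg]
      rw [show g * L * g⁻¹ = g * (L * g⁻¹) from by rw [Matrix.mul_assoc]]
      rw [hcancel]
    have ha : ∀ i j, F j i = -F i j := by
      intro i j
      have h1 := congrFun (congrFun hFT i) j
      simpa [Matrix.transpose_apply, Matrix.neg_apply] using h1
    have hdetF : F.det = 0 := by
      have h1 : F.det * g.det = 0 := by
        rw [← Matrix.det_mul, hFg, hdetL]
      rcases mul_eq_zero.1 h1 with h | h
      · exact h
      · exact absurd h hdet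
    have hP : F 0 1 * F 2 3 - F 0 2 * F 1 3 + F 0 3 * F 1 2 = 0 := by
      have h1 := det_antisym F ha
      rw [hdetF] at h1
      exact (pow_eq_zero_iff (by norm_num : (2:ℕ) ≠ 0)).1 h1.symm
    by_cases hF0 : F = 0
    · refine ⟨0, 0, ?_⟩
      rw [← hFg, hF0]
      simp
    · have hex : ∃ i j, F i j ≠ 0 := by
        by_contra h
        push_neg at h
        exact hF0 (by ext i j; simpa using h i j)
      obtain ⟨i, j, hij⟩ := hex
      refine ⟨fun k => F k i / F i j, fun k => F k j, ?_⟩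
      rw [← hFg]
      congr 1
      ext k l
      simp only [Matrix.sub_apply, vecMulVec_apply]
      have hid := plid F ha hP i j k l
      field_simp
      linear_combination -hid
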